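/- For all complex numbers x₁, x₂, x₃, x₄, y₁, y₂, y₃, y₄ the following two conditions are equivalent: (i) rank A₁(x,y) ≤ 1 and rank A₂(x,y) ≤ 1; (ii) rank A₁(x,y) ≤ 1 and the three determinants det !![x₁,x₃; y₄,y₂], det !![x₁,x₃; y₃,y₁], det !![x₂,x₄; y₃,y₁] all vanish. -/
import Mathlib


open Matrix

/-- The 4×2 matrix `A₁(x,y)` with rows `(x₁,x₂), (x₃,x₄), (y₂,y₁), (y₄,y₃)`. -/
def A1 (x₁ x₂ x₃ x₄ y₁ y₂ y₃ y₄ : ℂ) : Matrix (Fin 4) (Fin 2) ℂ :=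
  !![x₁, x₂; x₃, x₄; y₂, y₁; y₄, y₃]

/-- The 4×2 matrix `A₂(x,y)` with rows `(x₁,x₃), (x₂,x₄), (y₃,y₁), (y₄,y₂)`. -/
def A2 (x₁ x₂ x₃ x₄ y₁ y₂ y₃ y₄ : ℂ) : Matrix (Fin 4) (Fin 2) ℂ :=
  !![x₁, x₃; x₂, x₄; y₃, y₁; y₄, y₂]

lemma finrank_span_singleton_le' (v : Fin 4 → ℂ) :
    Module.finrank ℂ (ℂ ∙ v) ≤ 1 := by
  by_cases h : v = 0
  · subst h
    rw [Submodule.span_zero_singleton]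
    simp
  · rw [finrank_span_singleton h]

lemma span_cols_le (M : Matrix (Fin 4) (Fin 2) ℂ) (v : Fin 4 → ℂ)
    (h0 : Mᵀ 0 ∈ (ℂ ∙ v)) (h1 : Mᵀ 1 ∈ (ℂ ∙ v)) :
    Submodule.span ℂ (Set.range Mᵀ) ≤ (ℂ ∙ v) := by
  rw [Submodule.span_le]
  rintro _ ⟨k, rfl⟩
  fin_cases k
  · exact h0
  · exact h1

lemma rank_le_one_iff' (M : Matrix (Fin 4) (Fin 2) ℂ) :
    M.rank ≤ 1 ↔ ∀ i j, M i 0 * M j 1 = M i 1 * M j 0 := by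
  rw [Matrix.rank_eq_finrank_span_cols]
  constructor
  · intro h i j
    have hp : (Submodule.span ℂ (Set.range Mᵀ)).IsPrincipal := by
      rw [← Submodule.finrank_le_one_iff_isPrincipal]
      exact h
    obtain ⟨v, hv⟩ := hp
    have h0 : Mᵀ 0 ∈ Submodule.span ℂ (Set.range Mᵀ) :=
      Submodule.subset_span (Set.mem_range_self 0)
    have h1 : Mᵀ 1 ∈ Submodule.span ℂ (Set.range Mᵀ) :=
      Submodule.subset_span (Set.mem_range_self 1)
    rw [hv, Submodule.mem_span_singleton] at h0 h1
    obtain ⟨a, ha⟩ := h0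
    obtain ⟨b, hb⟩ := h1
    have ha' : ∀ k, M k 0 = a * v k := fun k => by
      rw [show M k 0 = Mᵀ 0 k from rfl, ← ha]; rfl
    have hb' : ∀ k, M k 1 = b * v k := fun k => by
      rw [show M k 1 = Mᵀ 1 k from rfl, ← hb]; rfl
    rw [ha' i, ha' j, hb' i, hb' j]
    ring
  · intro h
    by_cases h0 : Mᵀ 0 = 0
    · have hle := span_cols_le M (Mᵀ 1) (by simp [h0]) (Submodule.mem_span_singleton_self _)
      exact le_trans (Submodule.finrank_mono hle) (finrank_span_singleton_le' _)
    · obtain ⟨i, hi⟩ : ∃ i, M i 0 ≠ 0 := by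
        by_contra hc
        push_neg at hc
        exact h0 (funext fun k => hc k)
      have hcol : Mᵀ 1 = (M i 1 / M i 0) • Mᵀ 0 := by
        funext j
        have := h i j
        simp only [Matrix.transpose_apply, Pi.smul_apply, smul_eq_mul]
        field_simp
        linear_combination this
      have hle := span_cols_le M (Mᵀ 0) (Submodule.mem_span_singleton_self _)
        (hcol ▸ Submodule.smul_mem _ _ (Submodule.mem_span_singleton_self _))
      exact le_trans (Submodule.finrank_mono hle) (finrank_span_singleton_le' _)

theorem stmt0 (x₁ x₂ x₃ x₄ y₁ y₂ y₃ y₄ : ℂ) :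
    ((A1 x₁ x₂ x₃ x₄ y₁ y₂ y₃ y₄).rank ≤ 1 ∧ (A2 x₁ x₂ x₃ x₄ y₁ y₂ y₃ y₄).rank ≤ 1) ↔
      ((A1 x₁ x₂ x₃ x₄ y₁ y₂ y₃ y₄).rank ≤ 1 ∧
        (!![x₁, x₃; y₄, y₂] : Matrix (Fin 2) (Fin 2) ℂ).det = 0 ∧
        (!![x₁, x₃; y₃, y₁] : Matrix (Fin 2) (Fin 2) ℂ).det = 0 ∧
        (!![x₂, x₄; y₃, y₁] : Matrix (Fin 2) (Fin 2) ℂ).det = 0) := by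
  rw [rank_le_one_iff' (A1 _ _ _ _ _ _ _ _), rank_le_one_iff' (A2 _ _ _ _ _ _ _ _)]
  constructor
  · rintro ⟨h1, h2⟩
    refine ⟨h1, ?_, ?_, ?_⟩
    · have e := h2 0 3; simp [A2] at e
      simp [Matrix.det_fin_two_of]; linear_combination e
    · have e := h2 0 2; simp [A2] at e
      simp [Matrix.det_fin_two_of]; linear_combination e
    · have e := h2 1 2; simp [A2] at e
      simp [Matrix.det_fin_two_of]; linear_combination e
  · rintro ⟨h1, d1, d2, d3⟩
    refine ⟨h1, ?_⟩
    simp only [Matrix.det_fin_two_of] at d1 d2 d3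
    have e1 := h1 0 1; have e2 := h1 0 2; have e3 := h1 0 3
    have e4 := h1 1 2; have e5 := h1 1 3; have e6 := h1 2 3
    simp [A1] at e1 e2 e3 e4 e5 e6
    intro i j
    fin_cases i <;> fin_cases j <;> simp [A2] <;>
      first
        | ring1
        | linear_combination e1
        | linear_combination -e1
        | linear_combination e6
        | linear_combination -e6
        | linear_combination d1
        | linear_combination -d1
        | linear_combination d2
        | linear_combination -d2
        | linear_combination d3
        | linear_combination -d3
        | linear_combination -e2 + d2 + e5
        | linear_combination e2 - d2 - e5
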